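/- arXiv:2403.01605 — 5 statements merged into one kernel-verified Lean document; each statement's English description precedes it below -/
import Mathlib

section
/- The gradient of the log discounted occupancy measure satisfies the backward recursion: d_γ(s',a')(∇_θ log d_γ(s',a') - ∇_θ log π_θ(a'|s')) = γ Σ_{s,a} d_γ(s,a) P(s'|s,a) π_θ(a'|s') ∇_θ log d_γ(s,a), for all (s',a'). -/
open Finset

/-- Backward recursion for the gradient of the log discounted occupancy measure:
`d_γ(s',a')(∇log d_γ(s',a') - ∇log π(a'|s')) =
  γ ∑_{s,a} d_γ(s,a) P(s'|s,a) π(a'|s') ∇log d_γ(s,a)`.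
The parameter `θ` is scalar; gradients are derivatives in `θ` at `θ₀`. -/
theorem stmt_5 {S A : Type*} [Fintype S] [Fintype A]
    (P : S → A → S → ℝ) (d₀ : S → ℝ) (γ : ℝ) (hγ0 : 0 ≤ γ) (hγ1 : γ ≤ 1)
    (θ₀ : ℝ)
    (π : ℝ → S → A → ℝ)        -- parameterized policy
    (dS : ℝ → S → ℝ)            -- state occupancy d_γ(s), as a function of θ
    (dSA : ℝ → S → A → ℝ)       -- state-action occupancy d_γ(s,a)
    (hdecomp : ∀ θ s a, dSA θ s a = dS θ s * π θ s a)
    (hflow : ∀ θ s', dS θ s' =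
      (1 - γ) * d₀ s' + γ * ∑ s, ∑ a, dSA θ s a * P s a s')
    (g : S → A → ℝ) (gπ : S → A → ℝ)
    (hderiv : ∀ s a, HasDerivAt (fun θ => dSA θ s a) (g s a) θ₀)
    (hπderiv : ∀ s a, HasDerivAt (fun θ => π θ s a) (gπ s a) θ₀)
    (hpos : ∀ s a, 0 < dSA θ₀ s a) (hπpos : ∀ s a, 0 < π θ₀ s a) :
    ∀ s' a',
      dSA θ₀ s' a' * (g s' a' / dSA θ₀ s' a' - gπ s' a' / π θ₀ s' a') =
      γ * ∑ s, ∑ a, dSA θ₀ s a * P s a s' * π θ₀ s' a' *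
        (g s a / dSA θ₀ s a) := by
  intro s' a'
  -- derivative of dS at s'
  have hdS : HasDerivAt (fun θ => dS θ s')
      (γ * ∑ s, ∑ a, g s a * P s a s') θ₀ := by
    have h1 : HasDerivAt (fun θ => (1 - γ) * d₀ s' + γ * ∑ s, ∑ a, dSA θ s a * P s a s')
        (0 + γ * ∑ s, ∑ a, g s a * P s a s') θ₀ := by
      refine (hasDerivAt_const _ _).add (HasDerivAt.const_mul _ ?_)
      refine HasDerivAt.fun_sum fun s _ => HasDerivAt.fun_sum fun a _ => ?_
      exact (hderiv s a).mul_const _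
    rw [zero_add] at h1
    exact h1.congr_of_eventuallyEq (Filter.Eventually.of_forall fun θ => hflow θ s')
  -- derivative of dSA at (s', a') via product rule
  have hprod : HasDerivAt (fun θ => dSA θ s' a')
      ((γ * ∑ s, ∑ a, g s a * P s a s') * π θ₀ s' a' + dS θ₀ s' * gπ s' a') θ₀ := by
    have := hdS.mul (hπderiv s' a')
    exact this.congr_of_eventuallyEq
      (Filter.Eventually.of_forall fun θ => hdecomp θ s' a')
  have hkey : g s' a' =
      (γ * ∑ s, ∑ a, g s a * P s a s') * π θ₀ s' a' + dS θ₀ s' * gπ s' a' :=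
    (hderiv s' a').unique hprod
  have hπne : π θ₀ s' a' ≠ 0 := (hπpos s' a').ne'
  have hdSAne : dSA θ₀ s' a' ≠ 0 := (hpos s' a').ne'
  have hsum : ∑ s, ∑ a, dSA θ₀ s a * P s a s' * π θ₀ s' a' * (g s a / dSA θ₀ s a)
      = (∑ s, ∑ a, g s a * P s a s') * π θ₀ s' a' := by
    rw [Finset.sum_mul]
    refine Finset.sum_congr rfl fun s _ => ?_
    rw [Finset.sum_mul]
    refine Finset.sum_congr rfl fun a _ => ?_
    field_simp [(hpos s a).ne']
  have hdSne : dS θ₀ s' ≠ 0 := by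
    intro h
    have := hpos s' a'
    rw [hdecomp θ₀ s' a', h, zero_mul] at this
    exact lt_irrefl _ this
  calc dSA θ₀ s' a' * (g s' a' / dSA θ₀ s' a' - gπ s' a' / π θ₀ s' a')
      = g s' a' - dS θ₀ s' * gπ s' a' := by
        rw [hdecomp θ₀ s' a']
        field_simp
    _ = γ * ((∑ s, ∑ a, g s a * P s a s') * π θ₀ s' a') := by rw [hkey]; ring
    _ = γ * ∑ s, ∑ a, dSA θ₀ s a * P s a s' * π θ₀ s' a' * (g s a / dSA θ₀ s a) := by
        rw [hsum]
end

section
/- The backward operator Y_γ defined by (Y_γ·w)(s',a') := γ Σ_{s,a} P_b(s,a|s',a') w(s,a) + g(s',a') is a γ-contraction in the d_γ-weighted L¹ norm: for any U,V: S×A → ℝⁿ, Σ_{s',a'} d_γ(s',a') |Y_γU(s',a') - Y_γV(s',a')| ≤ γ Σ_{s,a} d_γ(s,a) |U(s,a) - V(s,a)|. -/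
/-- The backward operator `Y_γ w (s',a') = γ ∑_{s,a} P_b(s,a|s',a') w(s,a) + g(s',a')`
is a `γ`-contraction in the `d_γ`-weighted L¹ norm (values in `ℝⁿ`, with a norm). -/
theorem stmt_7 {S A : Type*} [Fintype S] [Fintype A] {n : ℕ}
    (P : S → A → S → ℝ) (π : S → A → ℝ)
    (hPnonneg : ∀ s a s', 0 ≤ P s a s') (hPsum : ∀ s a, ∑ s', P s a s' = 1)
    (hπnonneg : ∀ s a, 0 ≤ π s a) (hπsum : ∀ s, ∑ a, π s a = 1)
    (γ : ℝ) (hγ0 : 0 ≤ γ) (hγ1 : γ < 1)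
    (d : S → A → ℝ) (hdpos : ∀ s a, 0 < d s a) (hdsum : ∑ s, ∑ a, d s a = 1)
    (g : S → A → (Fin n → ℝ))
    -- the backward kernel
    (Pb : S → A → S → A → ℝ)
    (hPb : ∀ s a s' a', Pb s a s' a' = d s a * P s a s' * π s' a' / d s' a')
    -- the backward operator
    (Y : (S → A → (Fin n → ℝ)) → S → A → (Fin n → ℝ))
    (hY : ∀ w s' a', Y w s' a' =
      γ • (∑ s, ∑ a, Pb s a s' a' • w s a) + g s' a')
    (U V : S → A → (Fin n → ℝ)) :
    ∑ s', ∑ a', d s' a' * ‖Y U s' a' - Y V s' a'‖ ≤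
      γ * ∑ s, ∑ a, d s a * ‖U s a - V s a‖ := by
  set w : S → A → (Fin n → ℝ) := fun s a => U s a - V s a with hw
  have hPbnn : ∀ s a s' a', 0 ≤ Pb s a s' a' := by
    intro s a s' a'
    rw [hPb]
    exact div_nonneg (mul_nonneg (mul_nonneg (hdpos s a).le (hPnonneg s a s'))
      (hπnonneg s' a')) (hdpos s' a').le
  have key : ∀ s' a', d s' a' * ‖Y U s' a' - Y V s' a'‖ ≤
      ∑ s, ∑ a, γ * (d s a * P s a s' * π s' a') * ‖w s a‖ := by
    intro s' a'
    have hdiff : Y U s' a' - Y V s' a'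
        = γ • ∑ s, ∑ a, Pb s a s' a' • (w s a) := by
      rw [hY, hY, hw]
      simp [smul_sub, Finset.sum_sub_distrib]
    have hnorm : ‖Y U s' a' - Y V s' a'‖ ≤
        γ * ∑ s, ∑ a, Pb s a s' a' * ‖w s a‖ := by
      rw [hdiff, norm_smul, Real.norm_of_nonneg hγ0]
      refine mul_le_mul_of_nonneg_left ?_ hγ0
      calc ‖∑ s, ∑ a, Pb s a s' a' • (w s a)‖
          ≤ ∑ s, ‖∑ a, Pb s a s' a' • (w s a)‖ := norm_sum_le _ _
        _ ≤ ∑ s, ∑ a, ‖Pb s a s' a' • (w s a)‖ :=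
            Finset.sum_le_sum fun s _ => norm_sum_le _ _
        _ = ∑ s, ∑ a, Pb s a s' a' * ‖w s a‖ := by
            refine Finset.sum_congr rfl fun s _ => Finset.sum_congr rfl fun a _ => ?_
            rw [norm_smul, Real.norm_of_nonneg (hPbnn s a s' a')]
    calc d s' a' * ‖Y U s' a' - Y V s' a'‖
        ≤ d s' a' * (γ * ∑ s, ∑ a, Pb s a s' a' * ‖w s a‖) :=
          mul_le_mul_of_nonneg_left hnorm (hdpos s' a').le
      _ = ∑ s, ∑ a, γ * (d s a * P s a s' * π s' a') * ‖w s a‖ := by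
          rw [Finset.mul_sum, Finset.mul_sum]
          refine Finset.sum_congr rfl fun s _ => ?_
          rw [Finset.mul_sum, Finset.mul_sum]
          refine Finset.sum_congr rfl fun a _ => ?_
          rw [hPb]
          have hne : d s' a' ≠ 0 := (hdpos s' a').ne'
          field_simp
  calc ∑ s', ∑ a', d s' a' * ‖Y U s' a' - Y V s' a'‖
      ≤ ∑ s', ∑ a', ∑ s, ∑ a, γ * (d s a * P s a s' * π s' a') * ‖w s a‖ :=
        Finset.sum_le_sum fun s' _ => Finset.sum_le_sum fun a' _ => key s' a'
    _ = ∑ s, ∑ a, ∑ s', ∑ a', γ * (d s a * P s a s' * π s' a') * ‖w s a‖ := by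
        calc ∑ s', ∑ a', ∑ s, ∑ a, γ * (d s a * P s a s' * π s' a') * ‖w s a‖
            = ∑ s', ∑ s, ∑ a', ∑ a, γ * (d s a * P s a s' * π s' a') * ‖w s a‖ :=
              Finset.sum_congr rfl fun s' _ => Finset.sum_comm ..
          _ = ∑ s, ∑ s', ∑ a', ∑ a, γ * (d s a * P s a s' * π s' a') * ‖w s a‖ :=
              Finset.sum_comm ..
          _ = ∑ s, ∑ s', ∑ a, ∑ a', γ * (d s a * P s a s' * π s' a') * ‖w s a‖ :=
              Finset.sum_congr rfl fun s _ => Finset.sum_congr rfl fun s' _ =>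
                Finset.sum_comm ..
          _ = ∑ s, ∑ a, ∑ s', ∑ a', γ * (d s a * P s a s' * π s' a') * ‖w s a‖ :=
              Finset.sum_congr rfl fun s _ => Finset.sum_comm ..
    _ = γ * ∑ s, ∑ a, d s a * ‖U s a - V s a‖ := by
        rw [Finset.mul_sum]
        refine Finset.sum_congr rfl fun s _ => ?_
        rw [Finset.mul_sum]
        refine Finset.sum_congr rfl fun a _ => ?_
        calc ∑ s', ∑ a', γ * (d s a * P s a s' * π s' a') * ‖w s a‖
            = ∑ s', (γ * (d s a * P s a s') * ‖w s a‖) * ∑ a', π s' a' := by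
              refine Finset.sum_congr rfl fun s' _ => ?_
              rw [Finset.mul_sum]
              exact Finset.sum_congr rfl fun a' _ => by ring
          _ = ∑ s', γ * (d s a * ‖w s a‖) * P s a s' := by
              refine Finset.sum_congr rfl fun s' _ => ?_
              rw [hπsum]; ring
          _ = γ * (d s a * ‖w s a‖) * ∑ s', P s a s' := by rw [Finset.mul_sum]
          _ = γ * (d s a * ‖U s a - V s a‖) := by rw [hPsum]; simp [hw]
end

section
/- For γ ∈ [0,1), the iterates w_{k} = Y_γ · w_{k-1} of the backward operator converge, and the limit is the unique fixed point of Y_γ, which equals ∇_θ log d_γ^{π_θ}. In matrix form: lim_{k→∞} Y_γ^k W₀ = D^{-1}(I - γP_πᵀ)^{-1} D G for any initial W₀, where D = diag(d_γ), P_π is the induced state-action transition matrix, and G is the matrix of ∇_θ log π_θ values. -/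
open Matrix Filter

/-- For `γ ∈ [0,1)`, the iterates of the backward operator
`Y W = γ D⁻¹ Pπᵀ D W + G` converge to its unique fixed point
`D⁻¹ (I - γPπᵀ)⁻¹ D G`, which equals `∇_θ log d_γ`. -/
theorem stmt_9 {ι : Type*} [Fintype ι] [DecidableEq ι] {n : ℕ}
    (Pπ : Matrix ι ι ℝ)
    (hPnonneg : ∀ i j, 0 ≤ Pπ i j) (hProw : ∀ i, ∑ j, Pπ i j = 1)
    (γ : ℝ) (hγ0 : 0 ≤ γ) (hγ1 : γ < 1)
    (dγ : ι → ℝ) (hdpos : ∀ i, 0 < dγ i)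
    (D : Matrix ι ι ℝ) (hD : D = Matrix.diagonal dγ)
    (G : Matrix ι (Fin n) ℝ)
    (Y : Matrix ι (Fin n) ℝ → Matrix ι (Fin n) ℝ)
    (hY : ∀ W, Y W = γ • (D⁻¹ * (Pπᵀ) * D * W) + G) :
    (∀ W₀ : Matrix ι (Fin n) ℝ,
      Tendsto (fun k => Y^[k] W₀) atTop
        (nhds (D⁻¹ * ((1 : Matrix ι ι ℝ) - γ • Pπᵀ)⁻¹ * D * G))) ∧
    (∀ W : Matrix ι (Fin n) ℝ,
      Y W = W ↔ W = D⁻¹ * ((1 : Matrix ι ι ℝ) - γ • Pπᵀ)⁻¹ * D * G) := by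
  have hdne : ∀ i, dγ i ≠ 0 := fun i => (hdpos i).ne'
  -- D inverse is the diagonal of inverses
  have hDinv : D⁻¹ = Matrix.diagonal (fun i => (dγ i)⁻¹) := by
    apply Matrix.inv_eq_left_inv
    rw [hD, Matrix.diagonal_mul_diagonal]
    convert Matrix.diagonal_one with i
    exact inv_mul_cancel₀ (hdne i)
  have hDdet : IsUnit D.det := by
    rw [hD, Matrix.det_diagonal, isUnit_iff_ne_zero]
    exact Finset.prod_ne_zero_iff.2 fun i _ => hdne i
  have hDiD : D⁻¹ * D = 1 := Matrix.nonsing_inv_mul D hDdet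
  have hDDi : D * D⁻¹ = 1 := Matrix.mul_nonsing_inv D hDdet
  -- powers of Pπ are row-stochastic with nonneg entries
  have hpow : ∀ k : ℕ, (∀ i j, 0 ≤ (Pπ ^ k) i j) ∧ (∀ i, ∑ j, (Pπ ^ k) i j = 1) := by
    intro k
    induction k with
    | zero =>
      refine ⟨fun i j => ?_, fun i => ?_⟩
      · by_cases h : i = j <;> simp [pow_zero, Matrix.one_apply, h]
      · simp [pow_zero, Matrix.one_apply]
    | succ k ih =>
      rw [pow_succ]
      refine ⟨fun i j => ?_, fun i => ?_⟩
      · rw [Matrix.mul_apply]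
        exact Finset.sum_nonneg fun l _ => mul_nonneg (ih.1 i l) (hPnonneg l j)
      · simp only [Matrix.mul_apply]
        rw [Finset.sum_comm]
        simp_rw [← Finset.mul_sum, hProw, mul_one]
        exact ih.2 i
  have hpowle : ∀ (k : ℕ) (i j : ι), (Pπ ^ k) i j ≤ 1 := by
    intro k i j
    calc (Pπ ^ k) i j ≤ ∑ j', (Pπ ^ k) i j' :=
          Finset.single_le_sum (fun j' _ => (hpow k).1 i j') (Finset.mem_univ j)
      _ = 1 := (hpow k).2 i
  -- B := 1 - γ • Pπᵀ is invertible (ℓ¹ argument)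
  set B : Matrix ι ι ℝ := (1 : Matrix ι ι ℝ) - γ • Pπᵀ with hBdef
  have hBdet : IsUnit B.det := by
    rw [isUnit_iff_ne_zero]
    intro h
    obtain ⟨v, hv, hBv⟩ := Matrix.exists_mulVec_eq_zero_iff.2 h
    have hveq : ∀ i, v i = γ * ∑ j, Pπ j i * v j := by
      intro i
      have h1 := congrFun hBv i
      simp only [hBdef, Matrix.mulVec, dotProduct, Matrix.sub_apply,
        Matrix.smul_apply, Matrix.one_apply, Matrix.transpose_apply, smul_eq_mul,
        Pi.zero_apply, sub_mul, ite_mul, one_mul, zero_mul,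
        Finset.sum_sub_distrib, Finset.sum_ite_eq, Finset.mem_univ, if_true,
        mul_assoc, ← Finset.mul_sum] at h1
      linarith [h1]
    have hsum : ∑ i, |v i| ≤ γ * ∑ i, |v i| := by
      calc ∑ i, |v i| = ∑ i, |γ * ∑ j, Pπ j i * v j| := by
            apply Finset.sum_congr rfl; intro i _; rw [← hveq i]
        _ ≤ ∑ i, γ * ∑ j, Pπ j i * |v j| := by
            apply Finset.sum_le_sum
            intro i _
            rw [abs_mul, abs_of_nonneg hγ0]
            refine mul_le_mul_of_nonneg_left ?_ hγ0
            calc |∑ j, Pπ j i * v j| ≤ ∑ j, |Pπ j i * v j| :=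
                  Finset.abs_sum_le_sum_abs _ _
              _ = ∑ j, Pπ j i * |v j| := by
                  apply Finset.sum_congr rfl
                  intro j _
                  rw [abs_mul, abs_of_nonneg (hPnonneg j i)]
        _ = γ * ∑ i, |v i| := by
            rw [← Finset.mul_sum]
            congr 1
            rw [Finset.sum_comm]
            apply Finset.sum_congr rfl
            intro j _
            rw [← Finset.sum_mul, hProw, one_mul]
    have hpos : 0 < ∑ i, |v i| := by
      obtain ⟨i, hi⟩ := Function.ne_iff.1 hv
      exact Finset.sum_pos' (fun j _ => abs_nonneg _)
        ⟨i, Finset.mem_univ i, abs_pos.2 hi⟩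
    nlinarith
  have hBBi : B * B⁻¹ = 1 := Matrix.mul_nonsing_inv B hBdet
  have hBiB : B⁻¹ * B = 1 := Matrix.nonsing_inv_mul B hBdet
  set A : Matrix ι ι ℝ := γ • (D⁻¹ * Pπᵀ * D) with hAdef
  set Wstar : Matrix ι (Fin n) ℝ := D⁻¹ * B⁻¹ * D * G with hWdef
  have hYA : ∀ W, Y W = A * W + G := by
    intro W
    rw [hY, hAdef, Matrix.smul_mul, Matrix.mul_assoc]
  -- key identity : (γ • Pπᵀ) * B⁻¹ = B⁻¹ - 1
  have hkey : (γ • Pπᵀ) * B⁻¹ = B⁻¹ - 1 := by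
    have : γ • Pπᵀ = 1 - B := by rw [hBdef, sub_sub_cancel]
    rw [this, Matrix.sub_mul, Matrix.one_mul, hBBi]
  have hfixA : A * Wstar = Wstar - G := by
    calc A * Wstar = D⁻¹ * ((γ • Pπᵀ) * B⁻¹) * D * G := by
          rw [hAdef, hWdef]
          simp only [Matrix.smul_mul, Matrix.mul_smul, Matrix.mul_assoc]
          rw [← Matrix.mul_assoc D D⁻¹, hDDi, Matrix.one_mul]
      _ = D⁻¹ * (B⁻¹ - 1) * D * G := by rw [hkey]
      _ = Wstar - G := by
          rw [hWdef]
          simp only [Matrix.mul_sub, Matrix.sub_mul, Matrix.mul_one, Matrix.one_mul,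
            Matrix.mul_assoc]
          rw [← Matrix.mul_assoc D⁻¹ D, hDiD, Matrix.one_mul]
  have hfix : Y Wstar = Wstar := by
    rw [hYA, hfixA]; abel
  -- iteration formula
  have hiter : ∀ (k : ℕ) (W₀ : Matrix ι (Fin n) ℝ),
      Y^[k] W₀ = Wstar + A ^ k * (W₀ - Wstar) := by
    intro k
    induction k with
    | zero => intro W₀; simp
    | succ k ih =>
      intro W₀
      rw [Function.iterate_succ_apply', ih, hYA, Matrix.mul_add, pow_succ',
        Matrix.mul_assoc]
      rw [show A * Wstar = Wstar - G from hfixA]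
      abel
  -- A^k formula
  have hApow : ∀ k : ℕ, A ^ k = D⁻¹ * (γ • Pπᵀ) ^ k * D := by
    intro k
    induction k with
    | zero => simp [hDiD]
    | succ k ih =>
      rw [pow_succ, ih, hAdef, pow_succ]
      simp only [Matrix.smul_mul, Matrix.mul_smul, Matrix.mul_assoc]
      rw [← Matrix.mul_assoc D D⁻¹, hDDi, Matrix.one_mul]
  -- entrywise description of A^k
  have hApowEntry : ∀ (k : ℕ) (i j : ι),
      (A ^ k) i j = (dγ i)⁻¹ * (γ ^ k * (Pπ ^ k) j i) * dγ j := by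
    intro k i j
    rw [hApow k, hDinv, hD]
    rw [show (γ • Pπᵀ) ^ k = γ ^ k • (Pπ ^ k)ᵀ by
      rw [smul_pow, Matrix.transpose_pow]]
    rw [Matrix.mul_diagonal, Matrix.diagonal_mul, Matrix.smul_apply,
      Matrix.transpose_apply, smul_eq_mul]
  -- convergence of A^k * M to 0
  have hAconv : ∀ M : Matrix ι (Fin n) ℝ,
      Tendsto (fun k => A ^ k * M) atTop (nhds 0) := by
    intro M
    apply tendsto_pi_nhds.2
    intro i
    rw [tendsto_pi_nhds]
    intro l
    simp only [Matrix.zero_apply]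
    apply squeeze_zero_norm (a := fun k => (∑ j, (dγ i)⁻¹ * dγ j * |M j l|) * γ ^ k)
    · intro k
      rw [Real.norm_eq_abs, Matrix.mul_apply]
      calc |∑ j, (A ^ k) i j * M j l| ≤ ∑ j, |(A ^ k) i j * M j l| :=
            Finset.abs_sum_le_sum_abs _ _
        _ ≤ ∑ j, (dγ i)⁻¹ * dγ j * |M j l| * γ ^ k := by
            apply Finset.sum_le_sum
            intro j _
            rw [abs_mul, hApowEntry k i j]
            have h1 : |(dγ i)⁻¹ * (γ ^ k * (Pπ ^ k) j i) * dγ j|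
                = (dγ i)⁻¹ * (γ ^ k * (Pπ ^ k) j i) * dγ j := by
              apply abs_of_nonneg
              have hp0 := (hpow k).1 j i
              have hγk : (0:ℝ) ≤ γ ^ k := pow_nonneg hγ0 k
              have hdi : (0:ℝ) ≤ (dγ i)⁻¹ := le_of_lt (inv_pos.2 (hdpos i))
              have hdj : (0:ℝ) ≤ dγ j := le_of_lt (hdpos j)
              exact mul_nonneg (mul_nonneg hdi (mul_nonneg hγk hp0)) hdj
            rw [h1]
            have h2 : (dγ i)⁻¹ * (γ ^ k * (Pπ ^ k) j i) * dγ j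
                ≤ (dγ i)⁻¹ * γ ^ k * dγ j := by
              have hple := hpowle k j i
              have hγk : (0:ℝ) ≤ γ ^ k := pow_nonneg hγ0 k
              have hdi : (0:ℝ) ≤ (dγ i)⁻¹ := le_of_lt (inv_pos.2 (hdpos i))
              have hdj : (0:ℝ) ≤ dγ j := le_of_lt (hdpos j)
              have hrw : (dγ i)⁻¹ * (γ ^ k * (Pπ ^ k) j i) * dγ j
                  = ((dγ i)⁻¹ * γ ^ k * dγ j) * (Pπ ^ k) j i := by ring
              rw [hrw]
              calc ((dγ i)⁻¹ * γ ^ k * dγ j) * (Pπ ^ k) j i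
                  ≤ ((dγ i)⁻¹ * γ ^ k * dγ j) * 1 :=
                    mul_le_mul_of_nonneg_left hple
                      (mul_nonneg (mul_nonneg hdi hγk) hdj)
                _ = (dγ i)⁻¹ * γ ^ k * dγ j := mul_one _
            calc (dγ i)⁻¹ * (γ ^ k * (Pπ ^ k) j i) * dγ j * |M j l|
                ≤ (dγ i)⁻¹ * γ ^ k * dγ j * |M j l| := by
                  exact mul_le_mul_of_nonneg_right h2 (abs_nonneg _)
              _ = (dγ i)⁻¹ * dγ j * |M j l| * γ ^ k := by ring
        _ = (∑ j, (dγ i)⁻¹ * dγ j * |M j l|) * γ ^ k := by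
            rw [Finset.sum_mul]
    · have := (tendsto_pow_atTop_nhds_zero_of_lt_one hγ0 hγ1).const_mul
        (∑ j, (dγ i)⁻¹ * dγ j * |M j l|)
      simpa using this
  constructor
  · intro W₀
    have : Tendsto (fun k => Wstar + A ^ k * (W₀ - Wstar)) atTop (nhds (Wstar + 0)) :=
      (tendsto_const_nhds).add (hAconv (W₀ - Wstar))
    rw [add_zero] at this
    have heq : (fun k => Y^[k] W₀) = fun k => Wstar + A ^ k * (W₀ - Wstar) :=
      funext fun k => hiter k W₀
    rw [heq]
    exact this
  · intro W
    constructor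
    · intro hW
      have h1 : A * W + G = W := by rw [← hYA, hW]
      have h2 : D⁻¹ * B * D * W = G := by
        have h3 : ((1 : Matrix ι ι ℝ) - A) * W = G := by
          rw [Matrix.sub_mul, Matrix.one_mul]
          have h5 : A * W = W - G := eq_sub_of_add_eq h1
          rw [h5, sub_sub_cancel]
        have h4 : (1 : Matrix ι ι ℝ) - A = D⁻¹ * B * D := by
          rw [hAdef, hBdef]
          simp only [Matrix.mul_sub, Matrix.sub_mul, Matrix.mul_one, Matrix.one_mul,
            Matrix.mul_smul, Matrix.smul_mul, hDiD, Matrix.mul_assoc]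
        rw [← h4, h3]
      rw [hWdef, ← h2]
      simp only [Matrix.mul_assoc]
      rw [← Matrix.mul_assoc D D⁻¹, hDDi, Matrix.one_mul,
        ← Matrix.mul_assoc B⁻¹ B, hBiB, Matrix.one_mul,
        ← Matrix.mul_assoc D⁻¹ D, hDiD, Matrix.one_mul]
    · intro hW
      rw [hW]
      exact hfix
end

section
/- Policy gradient consistency: for γ ∈ [0,1), E_{(s,a)∼d_γ}[∇_θ log d_γ(s,a) · r(s,a)] = E_{(s,a)∼d_γ}[Q_γ(s,a) · ∇_θ log π_θ(a|s)], where Q_γ satisfies the Bellman equation Q_γ(s,a) = r(s,a) + γ E_{s'∼P(·|s,a), a'∼π(·|s')}[Q_γ(s',a')]. -/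
/-- Policy gradient consistency:
`E_{d_γ}[∇log d_γ(s,a) r(s,a)] = E_{d_γ}[Q_γ(s,a) ∇log π(a|s)]`,
where `Q_γ` satisfies the Bellman equation. Gradients are derivatives with
respect to a scalar parameter, represented by the functions `gld`, `glπ`. -/
theorem stmt_12 {S A : Type*} [Fintype S] [Fintype A]
    (P : S → A → S → ℝ) (π : S → A → ℝ) (r : S → A → ℝ)
    (hPnonneg : ∀ s a s', 0 ≤ P s a s') (hPsum : ∀ s a, ∑ s', P s a s' = 1)
    (hπnonneg : ∀ s a, 0 ≤ π s a) (hπsum : ∀ s, ∑ a, π s a = 1)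
    (γ : ℝ) (hγ0 : 0 ≤ γ) (hγ1 : γ < 1)
    (d : S → A → ℝ) (hdpos : ∀ s a, 0 < d s a)
    (gld : S → A → ℝ)   -- ∇_θ log d_γ(s,a)
    (glπ : S → A → ℝ)   -- ∇_θ log π_θ(a|s)
    -- the backward identity characterizing ∇log d_γ
    (hldg : ∀ s' a', d s' a' * (gld s' a' - glπ s' a') =
      γ * ∑ s, ∑ a, d s a * P s a s' * π s' a' * gld s a)
    (Q : S → A → ℝ)
    -- Bellman equation for Q_γ
    (hQ : ∀ s a, Q s a = r s a + γ * ∑ s', P s a s' * ∑ a', π s' a' * Q s' a') :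
    ∑ s, ∑ a, d s a * gld s a * r s a = ∑ s, ∑ a, d s a * Q s a * glπ s a := by

  -- Multiply the backward identity by `Q s' a'` and sum over (s',a').
  have key : ∀ s' a', d s' a' * gld s' a' * Q s' a' - d s' a' * Q s' a' * glπ s' a' =
      (γ * ∑ s, ∑ a, d s a * P s a s' * π s' a' * gld s a) * Q s' a' := by
    intro s' a'
    linear_combination Q s' a' * hldg s' a'
  have hsum : ∑ s', ∑ a', (d s' a' * gld s' a' * Q s' a' - d s' a' * Q s' a' * glπ s' a')
      = ∑ s', ∑ a', (γ * ∑ s, ∑ a, d s a * P s a s' * π s' a' * gld s a) * Q s' a' := by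
    refine Finset.sum_congr rfl fun s' _ => Finset.sum_congr rfl fun a' _ => key s' a'
  -- Rearrange the quadruple sum.
  have h2 : ∑ s', ∑ a', (γ * ∑ s, ∑ a, d s a * P s a s' * π s' a' * gld s a) * Q s' a'
      = ∑ s, ∑ a, d s a * gld s a * (γ * ∑ s', P s a s' * ∑ a', π s' a' * Q s' a') := by
    have e1 : ∀ s' a', (γ * ∑ s, ∑ a, d s a * P s a s' * π s' a' * gld s a) * Q s' a'
        = ∑ s, ∑ a, d s a * gld s a * (γ * (P s a s' * (π s' a' * Q s' a'))) := by
      intro s' a'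
      simp only [Finset.mul_sum, Finset.sum_mul]
      exact Finset.sum_congr rfl fun s _ => Finset.sum_congr rfl fun a _ => by ring
    calc ∑ s', ∑ a', (γ * ∑ s, ∑ a, d s a * P s a s' * π s' a' * gld s a) * Q s' a'
        = ∑ s', ∑ a', ∑ s, ∑ a, d s a * gld s a * (γ * (P s a s' * (π s' a' * Q s' a'))) := by
          exact Finset.sum_congr rfl fun s' _ => Finset.sum_congr rfl fun a' _ => e1 s' a'
      _ = ∑ s, ∑ a, ∑ s', ∑ a', d s a * gld s a * (γ * (P s a s' * (π s' a' * Q s' a'))) := by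
          have swap : ∀ (f : S → A → S → A → ℝ),
              ∑ s', ∑ a', ∑ s, ∑ a, f s' a' s a = ∑ s, ∑ a, ∑ s', ∑ a', f s' a' s a := by
            intro f
            rw [show (∑ s', ∑ a', ∑ s, ∑ a, f s' a' s a)
                  = ∑ p : S × A, ∑ q : S × A, f p.1 p.2 q.1 q.2 from by
                simp [Fintype.sum_prod_type],
              show (∑ s, ∑ a, ∑ s', ∑ a', f s' a' s a)
                  = ∑ q : S × A, ∑ p : S × A, f p.1 p.2 q.1 q.2 from by
                simp [Fintype.sum_prod_type]]
            exact Finset.sum_comm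
            
          exact swap fun s' a' s a => d s a * gld s a * (γ * (P s a s' * (π s' a' * Q s' a')))
      _ = ∑ s, ∑ a, d s a * gld s a * (γ * ∑ s', P s a s' * ∑ a', π s' a' * Q s' a') := by
          refine Finset.sum_congr rfl fun s _ => Finset.sum_congr rfl fun a _ => ?_
          simp only [Finset.mul_sum, Finset.sum_mul]
  have h3 : ∑ s, ∑ a, d s a * gld s a * (γ * ∑ s', P s a s' * ∑ a', π s' a' * Q s' a')
      = ∑ s, ∑ a, (d s a * gld s a * Q s a - d s a * gld s a * r s a) := by
    refine Finset.sum_congr rfl fun s _ => Finset.sum_congr rfl fun a _ => ?_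
    linear_combination (-(d s a * gld s a)) * hQ s a
  rw [h2, h3] at hsum
  rw [Finset.sum_congr rfl fun s' (_ : s' ∈ Finset.univ) => Finset.sum_sub_distrib _ _,
    Finset.sum_sub_distrib,
    Finset.sum_congr rfl fun s' (_ : s' ∈ Finset.univ) => Finset.sum_sub_distrib _ _,
    Finset.sum_sub_distrib] at hsum
  linarith
end

section
/- Residual error identity: for the average-reward occupancy d₁ and any γ ∈ [0,1), E_{(s,a)∼d₁}[∇_θ log d₁(s,a)·r(s,a)] = E_{(s,a)∼d₁}[Q_γ(s,a)·∇_θ log π_θ(a|s)] + (1-γ) E_{s∼d₁}[∇_θ log d₁(s) · V_γ(s)], where V_γ(s) = E_{a∼π(·|s)}[Q_γ(s,a)]. -/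
/-- Residual error identity:
`E_{d₁}[∇log d₁(s,a) r(s,a)] = E_{d₁}[Q_γ(s,a) ∇log π(a|s)]
  + (1-γ) E_{s∼d₁}[∇log d₁(s) V_γ(s)]`. -/
theorem stmt_13 {S A : Type*} [Fintype S] [Fintype A]
    (P : S → A → S → ℝ) (π : S → A → ℝ) (r : S → A → ℝ)
    (hPnonneg : ∀ s a s', 0 ≤ P s a s') (hPsum : ∀ s a, ∑ s', P s a s' = 1)
    (hπnonneg : ∀ s a, 0 ≤ π s a) (hπsum : ∀ s, ∑ a, π s a = 1)
    (γ : ℝ) (hγ0 : 0 ≤ γ) (hγ1 : γ < 1)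
    (d₁ : S → A → ℝ) (hdpos : ∀ s a, 0 < d₁ s a)
    (dS : S → ℝ) (hdS : ∀ s, dS s = ∑ a, d₁ s a)  -- state marginal of d₁
    (gld : S → A → ℝ)   -- ∇_θ log d₁(s,a)
    (gldS : S → ℝ)      -- ∇_θ log d₁(s)
    (glπ : S → A → ℝ)   -- ∇_θ log π_θ(a|s)
    (hdecomp : ∀ s a, gld s a = gldS s + glπ s a)
    -- the (γ = 1) backward identity characterizing ∇log d₁
    (hldg : ∀ s' a', d₁ s' a' * gld s' a' - d₁ s' a' * glπ s' a' =
      ∑ s, ∑ a, d₁ s a * P s a s' * π s' a' * gld s a)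
    (Q : S → A → ℝ)
    (hQ : ∀ s a, Q s a = r s a + γ * ∑ s', P s a s' * ∑ a', π s' a' * Q s' a')
    (V : S → ℝ) (hV : ∀ s, V s = ∑ a, π s a * Q s a) :
    ∑ s, ∑ a, d₁ s a * gld s a * r s a =
      (∑ s, ∑ a, d₁ s a * Q s a * glπ s a) +
      (1 - γ) * ∑ s, dS s * gldS s * V s := by
  classical
  set F : S → ℝ := fun s' => ∑ s, ∑ a, d₁ s a * P s a s' * gld s a with hF
  -- Step 1: d₁ s' a' * gldS s' = π s' a' * F s'
  have h1 : ∀ s' a', d₁ s' a' * gldS s' = π s' a' * F s' := by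
    intro s' a'
    have h := hldg s' a'
    have hd : d₁ s' a' * gld s' a' - d₁ s' a' * glπ s' a' = d₁ s' a' * gldS s' := by
      rw [hdecomp s' a']; ring
    rw [hd] at h
    rw [h, hF, Finset.mul_sum]
    refine Finset.sum_congr rfl fun s _ => ?_
    rw [Finset.mul_sum]
    exact Finset.sum_congr rfl fun a _ => by ring
  -- Step 2: dS s' * gldS s' = F s'
  have h2 : ∀ s', dS s' * gldS s' = F s' := by
    intro s'
    rw [hdS, Finset.sum_mul]
    calc ∑ a, d₁ s' a * gldS s' = ∑ a, π s' a * F s' :=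
          Finset.sum_congr rfl fun a _ => h1 s' a
      _ = (∑ a, π s' a) * F s' := (Finset.sum_mul _ _ _).symm
      _ = F s' := by rw [hπsum]; ring
  have key : ∀ s a, d₁ s a * gldS s = π s a * (dS s * gldS s) := by
    intro s a; rw [h2, h1]
  -- Bellman: r = Q - γ ∑ P V
  have hr : ∀ s a, r s a = Q s a - γ * ∑ s', P s a s' * V s' := by
    intro s a
    have hsum : ∑ s', P s a s' * V s' = ∑ s', P s a s' * ∑ a', π s' a' * Q s' a' :=
      Finset.sum_congr rfl fun s' _ => by rw [hV]
    have := hQ s a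
    rw [hsum]; linarith
  -- e1: split reward
  have e1 : ∑ s, ∑ a, d₁ s a * gld s a * r s a
      = (∑ s, ∑ a, d₁ s a * gld s a * Q s a)
        - γ * ∑ s', F s' * V s' := by
    have swap : ∑ s, ∑ a, d₁ s a * gld s a * ∑ s', P s a s' * V s'
        = ∑ s', F s' * V s' := by
      have : ∀ s a, d₁ s a * gld s a * ∑ s', P s a s' * V s'
          = ∑ s', d₁ s a * P s a s' * gld s a * V s' := by
        intro s a
        rw [Finset.mul_sum]
        exact Finset.sum_congr rfl fun s' _ => by ring
      simp only [this]
      have rhs : ∑ s', F s' * V s'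
          = ∑ s', ∑ s, ∑ a, d₁ s a * P s a s' * gld s a * V s' := by
        refine Finset.sum_congr rfl fun s' _ => ?_
        rw [hF]
        simp only [Finset.sum_mul]
      rw [rhs]
      exact (Finset.sum_congr rfl fun s _ => Finset.sum_comm).trans Finset.sum_comm
    have step : ∑ s, ∑ a, d₁ s a * gld s a * r s a
        = (∑ s, ∑ a, d₁ s a * gld s a * Q s a)
          - γ * ∑ s, ∑ a, d₁ s a * gld s a * ∑ s', P s a s' * V s' := by
      rw [Finset.mul_sum, ← Finset.sum_sub_distrib]
      refine Finset.sum_congr rfl fun s _ => ?_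
      rw [Finset.mul_sum, ← Finset.sum_sub_distrib]
      refine Finset.sum_congr rfl fun a _ => ?_
      rw [hr s a]; ring
    rw [step, swap]
  -- e3: decompose gld
  have e3 : ∑ s, ∑ a, d₁ s a * gld s a * Q s a
      = (∑ s, ∑ a, d₁ s a * Q s a * glπ s a) + ∑ s, dS s * gldS s * V s := by
    rw [← Finset.sum_add_distrib]
    refine Finset.sum_congr rfl fun s _ => ?_
    have : ∀ a, d₁ s a * gld s a * Q s a
        = d₁ s a * Q s a * glπ s a + π s a * (dS s * gldS s) * Q s a := by
      intro a
      rw [hdecomp s a]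
      linear_combination Q s a * key s a
    simp only [this]
    rw [Finset.sum_add_distrib]
    congr 1
    rw [hV, Finset.mul_sum]
    exact Finset.sum_congr rfl fun a _ => by ring
  rw [e1, e3]
  have e4 : ∑ s', F s' * V s' = ∑ s, dS s * gldS s * V s :=
    Finset.sum_congr rfl fun s _ => by rw [h2]
  rw [e4]; ring
end
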